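/- arXiv:2208.00168 — 2 statements merged into one kernel-verified Lean document; each statement's English description precedes it below -/
import Mathlib

section
/- There is a well-defined injective ℝ-algebra homomorphism from ℝ[u,v]/(u² + v² + 1) into the field ℂ((t⁻¹)) of formal Laurent series over ℂ, determined by u ↦ (t − t⁻¹)/2 and v ↦ (t + t⁻¹)/(2i). -/
open HahnSeries MvPolynomial

noncomputable section

/-- `t^i ∈ ℂ((t⁻¹))`: we model `ℂ((t⁻¹))` as `LaurentSeries ℂ` in the variable
`T = t⁻¹`, so `t^i = T^{-i}`. -/
def tPow (i : ℤ) : LaurentSeries ℂ := HahnSeries.single (-i) (1 : ℂ)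

/-- The coordinate ring `ℝ[u,v]/(u² + v² + 1)` of the affine part of the twistor
projective line. -/
abbrev TwistorRing : Type :=
  MvPolynomial (Fin 2) ℝ ⧸ Ideal.span {(X 0 : MvPolynomial (Fin 2) ℝ) ^ 2 + X 1 ^ 2 + 1}

namespace Stmt5Aux
abbrev LS := LaurentSeries ℂ
def aa : LS := (tPow 1 - tPow (-1)) / 2
def bb : LS := (tPow 1 + tPow (-1)) / (2 * algebraMap ℂ (LaurentSeries ℂ) Complex.I)
def cc : ℂ := (2 * Complex.I)⁻¹
def ww : LS := single (-1) 1 + single 1 1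

lemma cc_ne : cc ≠ 0 := by simp [cc, Complex.I_ne_zero]

lemma two_eq : (2 : LS) = HahnSeries.C (2:ℂ) := by rw [map_ofNat]

lemma two_ne : (2 : LS) ≠ 0 := by
  rw [two_eq]; simpa [HahnSeries.C_apply] using HahnSeries.single_ne_zero (two_ne_zero (α := ℂ))

lemma aa_eq : aa = single (-1) (2⁻¹ : ℂ) - single 1 2⁻¹ := by
  rw [aa, div_eq_iff two_ne, two_eq, tPow, tPow, HahnSeries.C_apply, sub_mul,
    HahnSeries.single_mul_single, HahnSeries.single_mul_single]
  norm_num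

lemma algebraMap_LS (z : ℂ) : algebraMap ℂ (LaurentSeries ℂ) z = HahnSeries.C z := by
  rw [show algebraMap ℂ (LaurentSeries ℂ) z = HahnSeries.ofPowerSeries ℤ ℂ (PowerSeries.C z) from rfl,
    HahnSeries.ofPowerSeries_C]

lemma CI_ne : (2 * algebraMap ℂ (LaurentSeries ℂ) Complex.I) ≠ 0 := by
  have : algebraMap ℂ (LaurentSeries ℂ) Complex.I ≠ 0 := by
    rw [algebraMap_LS]
    simpa [HahnSeries.C_apply] using HahnSeries.single_ne_zero (Complex.I_ne_zero)
  exact mul_ne_zero two_ne this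

lemma bb_eq : bb = HahnSeries.C cc * ww := by
  have h2I : (2 * algebraMap ℂ (LaurentSeries ℂ) Complex.I) = HahnSeries.C (2 * Complex.I) := by
    rw [map_mul, two_eq, algebraMap_LS]
  rw [bb, div_eq_iff CI_ne, h2I, mul_assoc, mul_comm ww (HahnSeries.C (2*Complex.I)), ← mul_assoc,
    ← map_mul, cc, inv_mul_cancel₀ (by simp [Complex.I_ne_zero]), map_one, one_mul, tPow, tPow, ww]
  norm_num

lemma coeff_sm (r : ℂ) (x : LS) (m : ℤ) :
    (single (-1 : ℤ) r * x).coeff m = r * x.coeff (m + 1) := by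
  simpa using HahnSeries.coeff_single_mul_add (r := r) (x := x) (a := m + 1) (b := (-1 : ℤ))

lemma coeff_sp (r : ℂ) (x : LS) (m : ℤ) :
    (single (1 : ℤ) r * x).coeff m = r * x.coeff (m - 1) := by
  simpa using HahnSeries.coeff_single_mul_add (r := r) (x := x) (a := m - 1) (b := (1 : ℤ))

lemma ww_pow (k : ℕ) :
    (∀ m : ℤ, m < -(k : ℤ) → (ww ^ k).coeff m = 0) ∧ (ww ^ k).coeff (-(k : ℤ)) = 1 := by
  induction k with
  | zero =>
      constructor
      · intro m hm
        rw [pow_zero, ← HahnSeries.single_zero_one, HahnSeries.coeff_single_of_ne (by omega)]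
      · rw [pow_zero, ← HahnSeries.single_zero_one]; simp
  | succ k ih =>
      have expand : ∀ m : ℤ, (ww ^ (k + 1)).coeff m
          = (ww ^ k).coeff (m + 1) + (ww ^ k).coeff (m - 1) := by
        intro m
        rw [pow_succ, mul_comm, ww, add_mul, HahnSeries.coeff_add, coeff_sm, coeff_sp,
          one_mul, one_mul]
      constructor
      · intro m hm
        rw [expand, ih.1 (m + 1) (by push_cast; omega), ih.1 (m - 1) (by push_cast; omega),
          add_zero]
      · rw [expand]
        have h1 : (-(((k : ℤ)) + 1) + 1) = -(k : ℤ) := by ring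
        have h2 : (-(((k : ℤ)) + 1) - 1) < -(k : ℤ) := by omega
        push_cast
        rw [h1, ih.2, ih.1 _ h2, add_zero]

lemma bb_pow_coeff (k : ℕ) (m : ℤ) : (bb ^ k).coeff m = cc ^ k * (ww ^ k).coeff m := by
  rw [bb_eq, mul_pow, ← map_pow, HahnSeries.C_apply, HahnSeries.coeff_single_zero_mul]

lemma aa_mul_coeff (x : LS) (m : ℤ) :
    (aa * x).coeff m = 2⁻¹ * x.coeff (m + 1) - 2⁻¹ * x.coeff (m - 1) := by
  rw [aa_eq, sub_mul, HahnSeries.coeff_sub, coeff_sm, coeff_sp]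

lemma algebraMap_LSR (r : ℝ) : algebraMap ℝ (LaurentSeries ℂ) r = HahnSeries.C (r : ℂ) := by
  rw [show algebraMap ℝ (LaurentSeries ℂ) r
      = HahnSeries.ofPowerSeries ℤ ℂ (algebraMap ℝ (PowerSeries ℂ) r) from rfl,
    PowerSeries.algebraMap_apply, HahnSeries.ofPowerSeries_C, Complex.coe_algebraMap]

lemma coeff_sum {α : Type*} (s : Finset α) (f : α → LS) (m : ℤ) :
    (∑ i ∈ s, f i).coeff m = ∑ i ∈ s, (f i).coeff m := by
  classical
  induction s using Finset.induction_on with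
  | empty => simp
  | @insert a s h ih => rw [Finset.sum_insert h, Finset.sum_insert h, HahnSeries.coeff_add, ih]

lemma aeval_coeff (Q : Polynomial ℝ) (N : ℕ) (h : Q.natDegree ≤ N) :
    (Polynomial.aeval bb Q : LS).coeff (-(N : ℤ)) = (Q.coeff N : ℂ) * cc ^ N := by
  rw [Polynomial.aeval_eq_sum_range' (lt_of_le_of_lt h (Nat.lt_succ_self N)) bb]
  simp only [Algebra.smul_def, algebraMap_LSR, HahnSeries.C_apply]
  rw [coeff_sum, Finset.sum_eq_single N]
  · rw [HahnSeries.coeff_single_zero_mul, bb_pow_coeff, (ww_pow N).2, mul_one]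
  · intro i hi hne
    have hiN : i < N := by
      have := Finset.mem_range.1 hi; omega
    rw [HahnSeries.coeff_single_zero_mul, bb_pow_coeff, (ww_pow i).1 _ (by omega), mul_zero, mul_zero]
  · intro h; exact absurd (Finset.self_mem_range_succ N) h


lemma aeval_vanish (Q : Polynomial ℝ) (m : ℤ) (h : m < -(Q.natDegree : ℤ)) :
    (Polynomial.aeval bb Q : LS).coeff m = 0 := by
  rw [Polynomial.aeval_eq_sum_range' (Nat.lt_succ_self _) bb]
  simp only [Algebra.smul_def, algebraMap_LSR, HahnSeries.C_apply]
  rw [coeff_sum]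
  refine Finset.sum_eq_zero fun i hi => ?_
  have : i ≤ Q.natDegree := by have := Finset.mem_range.1 hi; omega
  rw [HahnSeries.coeff_single_zero_mul, bb_pow_coeff, (ww_pow i).1 _ (by push_cast; omega),
    mul_zero, mul_zero]

lemma aeval_acoeff (Q : Polynomial ℝ) (N : ℕ) (h : Q.natDegree ≤ N) :
    (aa * Polynomial.aeval bb Q : LS).coeff (-(N : ℤ) - 1)
      = (Q.coeff N : ℂ) * (2⁻¹ * cc ^ N) := by
  rw [aa_mul_coeff, show (-(N : ℤ) - 1 + 1) = -(N : ℤ) by ring, aeval_coeff Q N h,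
    aeval_vanish Q _ (by push_cast; omega), mul_zero, sub_zero]
  ring

lemma key_step (Q0 Q1 : Polynomial ℝ)
    (h : Polynomial.aeval bb Q0 + aa * Polynomial.aeval bb Q1 = (0 : LS))
    (N : ℕ) (h0 : Q0.natDegree ≤ N + 1) (h1 : Q1.natDegree ≤ N) :
    Q0.coeff (N + 1) = 0 ∧ Q1.coeff N = 0 := by
  have e : (Q0.coeff (N + 1) : ℂ) * cc ^ (N + 1) + (Q1.coeff N : ℂ) * (2⁻¹ * cc ^ N) = 0 := by
    have := congrArg (fun x : LS => x.coeff (-((N : ℤ) + 1))) h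
    simp only [HahnSeries.coeff_add, HahnSeries.coeff_zero] at this
    rw [show (-((N : ℤ) + 1)) = -(((N + 1 : ℕ)) : ℤ) by push_cast; ring] at this
    rw [aeval_coeff Q0 (N + 1) h0] at this
    rw [show (-(((N + 1 : ℕ)) : ℤ)) = -(N : ℤ) - 1 by push_cast; ring] at this
    rw [aeval_acoeff Q1 N h1] at this
    exact this
  have e2 : (Q0.coeff (N + 1) : ℂ) * cc + (Q1.coeff N : ℂ) * 2⁻¹ = 0 := by
    have hcN : cc ^ N ≠ 0 := pow_ne_zero _ cc_ne
    field_simp at e ⊢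
    have : ((Q0.coeff (N + 1) : ℂ) * cc * 2 + (Q1.coeff N : ℂ)) * cc ^ N = 0 := by
      rw [pow_succ] at e; ring_nf at e ⊢; linear_combination e
    rcases mul_eq_zero.1 this with h' | h'
    · linear_combination h'
    · exact absurd h' hcN
  have e3 : (Q0.coeff (N + 1) : ℂ) + (Q1.coeff N : ℂ) * Complex.I = 0 := by
    rw [cc] at e2
    have hI := Complex.I_ne_zero
    field_simp at e2
    linear_combination e2
  constructor
  · have := congrArg Complex.re e3
    simpa using this
  · have := congrArg Complex.im e3
    simpa using this

lemma core (Q0 Q1 : Polynomial ℝ)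
    (h : Polynomial.aeval bb Q0 + aa * Polynomial.aeval bb Q1 = (0 : LS)) :
    Q0 = 0 ∧ Q1 = 0 := by
  have hQ1 : Q1 = 0 := by
    by_contra hQ1
    obtain ⟨M, hM⟩ : ∃ M, max Q0.natDegree (Q1.natDegree + 1) = M + 1 :=
      ⟨max Q0.natDegree (Q1.natDegree + 1) - 1, by
        have := le_max_right Q0.natDegree (Q1.natDegree + 1); omega⟩
    have hks := key_step Q0 Q1 h M
      (by have := le_max_left Q0.natDegree (Q1.natDegree + 1); omega)
      (by have := le_max_right Q0.natDegree (Q1.natDegree + 1); omega)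
    rcases max_choice Q0.natDegree (Q1.natDegree + 1) with hc | hc
    · have hQ0ne : Q0 ≠ 0 := by
        intro h0
        have hle := le_max_right Q0.natDegree (Q1.natDegree + 1)
        rw [hc, h0] at hle
        simp only [Polynomial.natDegree_zero] at hle
        omega
      have hA : Q0.natDegree = M + 1 := by rw [← hc, hM]
      have : Q0.coeff Q0.natDegree = 0 := by rw [hA]; exact hks.1
      exact hQ0ne (Polynomial.leadingCoeff_eq_zero.1 this)
    · have hx := hc.symm.trans hM
      have hMd : M = Q1.natDegree := by omega
      have : Q1.coeff Q1.natDegree = 0 := by rw [← hMd]; exact hks.2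
      exact hQ1 (Polynomial.leadingCoeff_eq_zero.1 this)
  subst hQ1
  refine ⟨?_, rfl⟩
  simp only [map_zero, mul_zero, add_zero] at h
  by_contra hQ0
  have := aeval_coeff Q0 Q0.natDegree le_rfl
  rw [h, HahnSeries.coeff_zero] at this
  have hc : (Q0.coeff Q0.natDegree : ℂ) = 0 := by
    rcases mul_eq_zero.1 this.symm with h' | h'
    · exact h'
    · exact absurd h' (pow_ne_zero _ cc_ne)
  have : Q0.coeff Q0.natDegree = 0 := by exact_mod_cast hc
  exact hQ0 (Polynomial.leadingCoeff_eq_zero.1 this)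


def e1 : MvPolynomial (Fin 1) ℝ ≃ₐ[ℝ] Polynomial ℝ :=
  (MvPolynomial.finSuccEquiv ℝ 0).trans
    (Polynomial.mapAlgEquiv (MvPolynomial.isEmptyAlgEquiv ℝ (Fin 0)))

def E2 : MvPolynomial (Fin 2) ℝ ≃ₐ[ℝ] Polynomial (Polynomial ℝ) :=
  (MvPolynomial.finSuccEquiv ℝ 1).trans (Polynomial.mapAlgEquiv e1)

lemma e1_X0 : e1 (X 0) = Polynomial.X := by
  rw [e1, AlgEquiv.trans_apply, MvPolynomial.finSuccEquiv_X_zero, Polynomial.coe_mapAlgEquiv,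
    Polynomial.map_X]

lemma E2_X0 : E2 (X 0) = Polynomial.X := by
  rw [E2, AlgEquiv.trans_apply, MvPolynomial.finSuccEquiv_X_zero, Polynomial.coe_mapAlgEquiv,
    Polynomial.map_X]

lemma E2_X1 : E2 (X 1) = Polynomial.C Polynomial.X := by
  rw [E2, AlgEquiv.trans_apply, show (1 : Fin 2) = Fin.succ 0 from rfl,
    MvPolynomial.finSuccEquiv_X_succ, Polynomial.coe_mapAlgEquiv, Polynomial.map_C]
  simp [e1_X0]

def Φ : Polynomial (Polynomial ℝ) →ₐ[ℝ] LS :=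
  ((Polynomial.aeval (R := LS) aa).restrictScalars ℝ).comp
    (Polynomial.mapAlgHom (Polynomial.aeval bb))

lemma Φ_X : Φ Polynomial.X = aa := by
  simp [Φ, Polynomial.mapAlgHom]

lemma Φ_C (q : Polynomial ℝ) : Φ (Polynomial.C q) = Polynomial.aeval bb q := by
  simp [Φ, Polynomial.mapAlgHom]

def ψ : MvPolynomial (Fin 2) ℝ →ₐ[ℝ] LS := Φ.comp E2.toAlgHom

lemma hzero : aa ^ 2 + bb ^ 2 + 1 = (0 : LS) := by
  have hIc : Complex.I * cc = 2⁻¹ := by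
    rw [cc, mul_inv, mul_comm ((2:ℂ)⁻¹), ← mul_assoc, mul_inv_cancel₀ Complex.I_ne_zero, one_mul]
  have hs : aa + HahnSeries.C Complex.I * bb = single (-1 : ℤ) (1 : ℂ) := by
    rw [bb_eq, ← mul_assoc, ← map_mul, hIc, aa_eq, HahnSeries.C_apply, ww, mul_add,
      HahnSeries.single_mul_single, HahnSeries.single_mul_single]
    ext m
    simp only [HahnSeries.coeff_add, HahnSeries.coeff_sub, HahnSeries.coeff_single]
    split_ifs <;> first | omega | norm_num
  have hs' : HahnSeries.C Complex.I * bb - aa = single (1 : ℤ) (1 : ℂ) := by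
    rw [bb_eq, ← mul_assoc, ← map_mul, hIc, aa_eq, HahnSeries.C_apply, ww, mul_add,
      HahnSeries.single_mul_single, HahnSeries.single_mul_single]
    ext m
    simp only [HahnSeries.coeff_sub, HahnSeries.coeff_add, HahnSeries.coeff_single]
    split_ifs <;> first | omega | norm_num
  have hI2 : (HahnSeries.C Complex.I : LS) ^ 2 = -1 := by
    rw [← map_pow, Complex.I_sq, map_neg, map_one]
  have hmul : (aa + HahnSeries.C Complex.I * bb) * (HahnSeries.C Complex.I * bb - aa)
      = (1 : LS) := by
    rw [hs, hs', HahnSeries.single_mul_single]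
    norm_num [HahnSeries.single_zero_one]
  have expand' : (aa + HahnSeries.C Complex.I * bb) * (HahnSeries.C Complex.I * bb - aa)
      = -1 * bb ^ 2 - aa ^ 2 := by
    have h' : (aa + HahnSeries.C Complex.I * bb) * (HahnSeries.C Complex.I * bb - aa)
        = (HahnSeries.C Complex.I) ^ 2 * bb ^ 2 - aa ^ 2 := by ring
    rw [h', hI2]
  linear_combination expand' - hmul

def fgen : MvPolynomial (Fin 2) ℝ := X 0 ^ 2 + X 1 ^ 2 + 1

def F : Polynomial (Polynomial ℝ) := Polynomial.X ^ 2 + Polynomial.C (Polynomial.X ^ 2 + 1)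

lemma E2_f : E2 fgen = F := by
  simp only [fgen, F, map_add, map_pow, map_one, E2_X0, E2_X1, Polynomial.C_add,
    Polynomial.C_pow, Polynomial.C_1]
  ring

lemma F_monic : F.Monic := by
  apply Polynomial.monic_X_pow_add
  calc (Polynomial.C (Polynomial.X ^ 2 + 1) : Polynomial (Polynomial ℝ)).degree ≤ 0 :=
        Polynomial.degree_C_le
    _ < 2 := by norm_num

lemma F_deg : F.degree = 2 := by
  rw [F]
  rw [Polynomial.degree_add_eq_left_of_degree_lt]
  · exact Polynomial.degree_X_pow 2
  · rw [Polynomial.degree_X_pow]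
    calc (Polynomial.C (Polynomial.X ^ 2 + 1) : Polynomial (Polynomial ℝ)).degree ≤ 0 :=
          Polynomial.degree_C_le
      _ < 2 := by norm_num

lemma Φ_F : Φ F = 0 := by
  rw [F, map_add, map_pow, Φ_X, Φ_C]
  rw [map_add, map_pow, map_one, Polynomial.aeval_X]
  rw [show aa ^ 2 + (bb ^ 2 + 1) = aa ^ 2 + bb ^ 2 + 1 by ring, hzero]

lemma ψ_f : ψ fgen = 0 := by
  show Φ (E2 fgen) = 0
  rw [E2_f, Φ_F]

lemma ker_le (p : MvPolynomial (Fin 2) ℝ) (hp : ψ p = 0) : p ∈ Ideal.span {fgen} := by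
  have hΦg : Φ (E2 p) = 0 := hp
  have hdiv := Polynomial.modByMonic_add_div (E2 p) F
  have hr : Φ (E2 p %ₘ F) = 0 := by
    have h' : Φ (E2 p) = Φ (E2 p %ₘ F) + Φ F * Φ (E2 p /ₘ F) := by
      rw [← map_mul, ← map_add, hdiv]
    rw [hΦg, Φ_F, zero_mul, add_zero] at h'
    exact h'.symm
  have hrdeg : (E2 p %ₘ F).degree ≤ 1 := by
    have h2 := Polynomial.degree_modByMonic_lt (E2 p) F_monic
    rw [F_deg] at h2
    exact Order.lt_succ_iff.1 (by exact_mod_cast h2)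
  have hrform := Polynomial.eq_X_add_C_of_degree_le_one hrdeg
  have hcore := core ((E2 p %ₘ F).coeff 0) ((E2 p %ₘ F).coeff 1) ?_
  · have hr0 : E2 p %ₘ F = 0 := by
      rw [hrform, hcore.1, hcore.2]
      simp
    have hg : E2 p = F * (E2 p /ₘ F) := by
      have hg' := hdiv
      rw [hr0, zero_add] at hg'
      exact hg'.symm
    rw [Ideal.mem_span_singleton]
    refine ⟨E2.symm (E2 p /ₘ F), ?_⟩
    apply E2.injective
    rw [map_mul, E2_f, AlgEquiv.apply_symm_apply, ← hg]
  · have h' : Φ (E2 p %ₘ F) = Polynomial.aeval bb ((E2 p %ₘ F).coeff 0)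
        + aa * Polynomial.aeval bb ((E2 p %ₘ F).coeff 1) := by
      conv_lhs => rw [hrform]
      rw [map_add, map_mul, Φ_C, Φ_C, Φ_X]
      ring
    rw [← h', hr]

end Stmt5Aux

/-- there is a well-defined injective `ℝ`-algebra homomorphism
`ℝ[u,v]/(u² + v² + 1) → ℂ((t⁻¹))` determined by `u ↦ (t − t⁻¹)/2` and
`v ↦ (t + t⁻¹)/(2i)`. -/
theorem stmt5 :
    ∃ φ : TwistorRing →ₐ[ℝ] LaurentSeries ℂ,
      Function.Injective φ ∧
      φ (Ideal.Quotient.mk _ (X 0)) = (tPow 1 - tPow (-1)) / 2 ∧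
      φ (Ideal.Quotient.mk _ (X 1)) =
        (tPow 1 + tPow (-1)) / (2 * algebraMap ℂ (LaurentSeries ℂ) Complex.I) := by
  classical
  have hI : ∀ a ∈ Ideal.span {(X 0 : MvPolynomial (Fin 2) ℝ) ^ 2 + X 1 ^ 2 + 1},
      Stmt5Aux.ψ a = 0 := by
    intro a ha
    rw [show ({(X 0 : MvPolynomial (Fin 2) ℝ) ^ 2 + X 1 ^ 2 + 1} : Set _) = {Stmt5Aux.fgen}
      from rfl] at ha
    obtain ⟨q, rfl⟩ := Ideal.mem_span_singleton.1 ha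
    rw [map_mul, Stmt5Aux.ψ_f, zero_mul]
  refine ⟨Ideal.Quotient.liftₐ _ Stmt5Aux.ψ hI, ?_, ?_, ?_⟩
  · rw [injective_iff_map_eq_zero]
    intro z hz
    obtain ⟨p, rfl⟩ := Ideal.Quotient.mk_surjective z
    change Stmt5Aux.ψ p = 0 at hz
    rw [Ideal.Quotient.eq_zero_iff_mem]
    exact Stmt5Aux.ker_le p hz
  · change Stmt5Aux.ψ (X 0) = _
    show Stmt5Aux.Φ (Stmt5Aux.E2 (X 0)) = _
    rw [Stmt5Aux.E2_X0, Stmt5Aux.Φ_X]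
    rfl
  · change Stmt5Aux.ψ (X 1) = _
    show Stmt5Aux.Φ (Stmt5Aux.E2 (X 1)) = _
    rw [Stmt5Aux.E2_X1, Stmt5Aux.Φ_C, Polynomial.aeval_X]
    rfl

end
end

section
/- Under the embedding of A = ℝ[u,v]/(u² + v² + 1) into ℂ((t⁻¹)) given by u ↦ (t − t⁻¹)/2 and v ↦ (t + t⁻¹)/(2i), the preimage of the valuation subring ℂ[[t⁻¹]] ⊂ ℂ((t⁻¹)) is exactly the subring ℝ·1 of constants. -/
open HahnSeries MvPolynomial

noncomputable section

/-- The image of `u`. -/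
def Uu : LaurentSeries ℂ := HahnSeries.single (-1) (2⁻¹ : ℂ) - HahnSeries.single 1 (2⁻¹ : ℂ)
/-- `(2i)⁻¹`. -/
def Vcc : ℂ := (2 * Complex.I)⁻¹
/-- The image of `v`. -/
def Vv : LaurentSeries ℂ := HahnSeries.single (-1) Vcc + HahnSeries.single 1 Vcc

lemma amap (x : ℂ) : (algebraMap ℂ (LaurentSeries ℂ)) x = HahnSeries.single (0:ℤ) x := by
  rw [HahnSeries.algebraMap_apply', PowerSeries.algebraMap_apply, Algebra.algebraMap_self_apply,
    HahnSeries.ofPowerSeries_C, HahnSeries.C_apply]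

lemma amapR (r : ℝ) : (algebraMap ℝ (LaurentSeries ℂ)) r = HahnSeries.single (0:ℤ) (r:ℂ) := by
  rw [HahnSeries.algebraMap_apply', PowerSeries.algebraMap_apply,
    HahnSeries.ofPowerSeries_C, HahnSeries.C_apply, Complex.coe_algebraMap]

lemma two_eq : (2 : LaurentSeries ℂ) = HahnSeries.single (0:ℤ) (2:ℂ) := by
  rw [← HahnSeries.C_apply, map_ofNat]

lemma Uu_eq : (tPow 1 - tPow (-1)) / 2 = Uu := by
  rw [two_eq, div_eq_iff (HahnSeries.single_ne_zero (by norm_num : (2:ℂ) ≠ 0)), Uu, sub_mul,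
    HahnSeries.single_mul_single, HahnSeries.single_mul_single, tPow, tPow]
  norm_num

lemma Vv_eq : (tPow 1 + tPow (-1)) / (2 * algebraMap ℂ (LaurentSeries ℂ) Complex.I) = Vv := by
  have h2I : (2 * algebraMap ℂ (LaurentSeries ℂ) Complex.I)
      = HahnSeries.single (0:ℤ) (2*Complex.I) := by
    rw [amap, two_eq, HahnSeries.single_mul_single]
    norm_num
  rw [h2I]
  have hne : HahnSeries.single (0:ℤ) (2*Complex.I) ≠ 0 :=
    HahnSeries.single_ne_zero (by simp [Complex.I_ne_zero])
  rw [div_eq_iff hne, Vv, add_mul, HahnSeries.single_mul_single,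
    HahnSeries.single_mul_single, tPow, tPow, Vcc]
  rw [inv_mul_cancel₀ (by simp [Complex.I_ne_zero] : (2*Complex.I : ℂ) ≠ 0)]
  norm_num

lemma coeff_mul_single (x : LaurentSeries ℂ) (b m : ℤ) (r : ℂ) :
    (x * HahnSeries.single b r).coeff m = x.coeff (m - b) * r := by
  have := HahnSeries.coeff_mul_single_add (r := r) (x := x) (a := m - b) (b := b)
  simpa using this

lemma coeff_mul_Uu (x : LaurentSeries ℂ) (m : ℤ) :
    (x * Uu).coeff m = x.coeff (m+1) * 2⁻¹ - x.coeff (m-1) * 2⁻¹ := by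
  rw [Uu, mul_sub, HahnSeries.coeff_sub, coeff_mul_single, coeff_mul_single]
  norm_num

lemma coeff_mul_Vv (x : LaurentSeries ℂ) (m : ℤ) :
    (x * Vv).coeff m = x.coeff (m+1) * Vcc + x.coeff (m-1) * Vcc := by
  rw [Vv, mul_add, HahnSeries.coeff_add, coeff_mul_single, coeff_mul_single]
  norm_num

lemma Uu_pow_coeff (k : ℕ) : (∀ m : ℤ, m < -(k:ℤ) → (Uu ^ k).coeff m = 0) ∧
    (Uu ^ k).coeff (-(k:ℤ)) = 2⁻¹ ^ k := by
  induction k with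
  | zero =>
    refine ⟨fun m hm => ?_, by simp [HahnSeries.coeff_one]⟩
    rw [pow_zero, HahnSeries.coeff_one, if_neg (by omega : ¬ m = 0)]
  | succ k ih =>
    have hstep : ∀ m : ℤ, (Uu ^ (k+1)).coeff m
        = (Uu ^ k).coeff (m+1) * 2⁻¹ - (Uu ^ k).coeff (m-1) * 2⁻¹ := by
      intro m; rw [pow_succ, coeff_mul_Uu]
    constructor
    · intro m hm
      rw [hstep, ih.1 (m+1) (by push_cast at hm ⊢; omega), ih.1 (m-1) (by push_cast at hm ⊢; omega)]
      ring
    · rw [hstep]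
      have h1 : (-((k:ℤ)+1) + 1) = -(k:ℤ) := by ring
      have h2 : (Uu ^ k).coeff (-((k:ℤ)+1) - 1) = 0 := ih.1 _ (by omega)
      push_cast
      rw [h1, h2, ih.2]
      ring

lemma aeval_Uu_coeff (f : Polynomial ℝ) (m : ℤ) :
    (Polynomial.aeval Uu f).coeff m
      = ∑ i ∈ Finset.range (f.natDegree+1), (f.coeff i : ℂ) * (Uu ^ i).coeff m := by
  rw [Polynomial.aeval_def, Polynomial.eval₂_eq_sum_range]
  refine (map_sum (HahnSeries.coeff.addMonoidHom m) _ _).trans ?_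
  exact Finset.sum_congr rfl fun i _ => by
    rw [HahnSeries.coeff.addMonoidHom_apply, amapR, HahnSeries.coeff_single_zero_mul]

lemma aeval_Uu_coeff_lt (f : Polynomial ℝ) (m : ℤ) (hm : m < -(f.natDegree : ℤ)) :
    (Polynomial.aeval Uu f).coeff m = 0 := by
  rw [aeval_Uu_coeff]
  refine Finset.sum_eq_zero fun i hi => ?_
  rw [Finset.mem_range] at hi
  rw [(Uu_pow_coeff i).1 m (by
      have : (i:ℤ) ≤ f.natDegree := by exact_mod_cast Nat.lt_succ_iff.mp hi
      omega), mul_zero]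

lemma aeval_Uu_coeff_lead (f : Polynomial ℝ) :
    (Polynomial.aeval Uu f).coeff (-(f.natDegree : ℤ))
      = (f.leadingCoeff : ℂ) * 2⁻¹ ^ f.natDegree := by
  rw [aeval_Uu_coeff]
  rw [Finset.sum_eq_single f.natDegree]
  · rw [(Uu_pow_coeff f.natDegree).2, Polynomial.leadingCoeff]
  · intro i hi hne
    rw [Finset.mem_range] at hi
    have hi' : i < f.natDegree := lt_of_le_of_ne (Nat.lt_succ_iff.mp hi) hne
    rw [(Uu_pow_coeff i).1 _ (by exact_mod_cast neg_lt_neg (by exact_mod_cast hi')), mul_zero]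
  · intro h; exact absurd (Finset.self_mem_range_succ _) h

lemma twistor_repr (a : TwistorRing) : ∃ f g : Polynomial ℝ,
    a = Ideal.Quotient.mk _ (Polynomial.aeval (X 0 : MvPolynomial (Fin 2) ℝ) f
          + Polynomial.aeval (X 0 : MvPolynomial (Fin 2) ℝ) g * X 1) := by
  obtain ⟨p, rfl⟩ := Ideal.Quotient.mk_surjective a
  induction p using MvPolynomial.induction_on with
  | C r =>
      exact ⟨Polynomial.C r, 0, by simp [MvPolynomial.algebraMap_eq]⟩
  | add p q hp hq =>
      obtain ⟨f1, g1, h1⟩ := hp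
      obtain ⟨f2, g2, h2⟩ := hq
      refine ⟨f1 + f2, g1 + g2, ?_⟩
      rw [map_add, h1, h2, ← map_add]
      congr 1
      rw [map_add, map_add]
      ring
  | mul_X p i hp =>
      obtain ⟨f, g, h⟩ := hp
      have h01 : i = 0 ∨ i = 1 := by fin_cases i; exacts [Or.inl rfl, Or.inr rfl]
      rcases h01 with rfl | rfl
      · refine ⟨Polynomial.X * f, Polynomial.X * g, ?_⟩
        rw [map_mul, h, ← map_mul]
        congr 1
        rw [map_mul, map_mul, Polynomial.aeval_X]
        ring
      · refine ⟨-((Polynomial.X ^ 2 + 1) * g), f, ?_⟩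
        rw [map_mul, h, ← map_mul, Ideal.Quotient.eq]
        refine Ideal.mem_span_singleton.2 ⟨Polynomial.aeval (X 0 : MvPolynomial (Fin 2) ℝ) g, ?_⟩
        rw [map_neg, map_mul, map_add, map_pow, map_one, Polynomial.aeval_X]
        ring

lemma combo_eq_zero {r s : ℝ} (h : (r:ℂ) + (s:ℂ) * Vcc = 0) : r = 0 ∧ s = 0 := by
  have hVcc : Vcc = -(2⁻¹) * Complex.I := by rw [Vcc, mul_inv, Complex.inv_I]; ring
  rw [hVcc] at h
  have him := congrArg Complex.im h
  have hre := congrArg Complex.re h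
  simp [Complex.add_im, Complex.mul_im, Complex.add_re, Complex.mul_re] at him hre
  exact ⟨hre, him⟩

/-- under the embedding `A = ℝ[u,v]/(u² + v² + 1) → ℂ((t⁻¹))` with
`u ↦ (t − t⁻¹)/2` and `v ↦ (t + t⁻¹)/(2i)`, the preimage of the valuation subring
`ℂ[[t⁻¹]] ⊂ ℂ((t⁻¹))` (the series with no positive powers of `t`) is exactly the
subring `ℝ·1` of constants. -/
theorem stmt7 (φ : TwistorRing →ₐ[ℝ] LaurentSeries ℂ)
    (hu : φ (Ideal.Quotient.mk _ (X 0)) = (tPow 1 - tPow (-1)) / 2)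
    (hv : φ (Ideal.Quotient.mk _ (X 1)) =
      (tPow 1 + tPow (-1)) / (2 * algebraMap ℂ (LaurentSeries ℂ) Complex.I)) :
    ⇑φ ⁻¹' {f : LaurentSeries ℂ | ∀ m : ℤ, m < 0 → f.coeff m = 0} =
      Set.range (algebraMap ℝ TwistorRing) := by
  have hU : φ (Ideal.Quotient.mk _ (X 0)) = Uu := by rw [hu, Uu_eq]
  have hV : φ (Ideal.Quotient.mk _ (X 1)) = Vv := by rw [hv, Vv_eq]
  have key : ∀ q : Polynomial ℝ,
      φ (Ideal.Quotient.mk _ (Polynomial.aeval (X 0 : MvPolynomial (Fin 2) ℝ) q))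
        = Polynomial.aeval Uu q := by
    intro q
    have h2 := Polynomial.aeval_algHom_apply
      (φ.comp (Ideal.Quotient.mkₐ ℝ
        (Ideal.span {(X 0 : MvPolynomial (Fin 2) ℝ) ^ 2 + X 1 ^ 2 + 1}))) (X 0) q
    simp only [AlgHom.comp_apply, Ideal.Quotient.mkₐ_eq_mk, hU] at h2
    exact h2.symm
  ext a
  simp only [Set.mem_preimage, Set.mem_setOf_eq, Set.mem_range]
  constructor
  · intro ha
    obtain ⟨f, g, rfl⟩ := twistor_repr a
    have hφa : φ (Ideal.Quotient.mk _ (Polynomial.aeval (X 0 : MvPolynomial (Fin 2) ℝ) f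
          + Polynomial.aeval (X 0 : MvPolynomial (Fin 2) ℝ) g * X 1))
        = Polynomial.aeval Uu f + Polynomial.aeval Uu g * Vv := by
      simp only [map_add, map_mul, key, hV]
    rw [hφa] at ha
    -- step 1 : g = 0
    have hg : g = 0 := by
      by_contra hgne
      obtain ⟨k, hk⟩ : ∃ k : ℕ, k = max f.natDegree (g.natDegree + 1) := ⟨_, rfl⟩
      have hmax := max_choice f.natDegree (g.natDegree + 1)
      rw [← hk] at hmax
      have hgk : g.natDegree + 1 ≤ k := hk ▸ le_max_right _ _
      have hfk : f.natDegree ≤ k := hk ▸ le_max_left _ _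
      have hk1 : 1 ≤ k := by omega
      have h0 := ha (-(k:ℤ)) (by omega)
      rw [HahnSeries.coeff_add, coeff_mul_Vv,
        aeval_Uu_coeff_lt g (-(k:ℤ) - 1) (by omega), zero_mul, add_zero] at h0
      by_cases hc : k = g.natDegree + 1
      · have hgl : (-(k:ℤ) + 1) = -(g.natDegree:ℤ) := by omega
        rw [hgl, aeval_Uu_coeff_lead] at h0
        have hF : ∃ r : ℝ, (Polynomial.aeval Uu f).coeff (-(k:ℤ)) = (r:ℂ) := by
          by_cases hcf : k = f.natDegree
          · refine ⟨f.leadingCoeff * (2⁻¹:ℝ) ^ f.natDegree, ?_⟩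
            rw [show (-(k:ℤ)) = -(f.natDegree:ℤ) from by omega, aeval_Uu_coeff_lead]
            push_cast
            ring
          · exact ⟨0, by
              rw [aeval_Uu_coeff_lt f (-(k:ℤ)) (by omega), Complex.ofReal_zero]⟩
        obtain ⟨r, hr⟩ := hF
        rw [hr] at h0
        have h0' : (r:ℂ) + ((g.leadingCoeff * (2⁻¹:ℝ) ^ g.natDegree : ℝ) : ℂ) * Vcc = 0 := by
          push_cast
          linear_combination h0
        have hz := (combo_eq_zero h0').2
        have h2 : g.leadingCoeff = 0 := by
          have hp : (2⁻¹:ℝ) ^ g.natDegree ≠ 0 := pow_ne_zero _ (by norm_num)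
          exact (mul_eq_zero.mp hz).resolve_right hp
        exact hgne (Polynomial.leadingCoeff_eq_zero.mp h2)
      · have hkf : k = f.natDegree := by
          rcases hmax with h | h
          · exact h
          · exact absurd h hc
        rw [aeval_Uu_coeff_lt g (-(k:ℤ) + 1) (by omega), zero_mul, add_zero,
          show (-(k:ℤ)) = -(f.natDegree:ℤ) from by omega, aeval_Uu_coeff_lead] at h0
        have hf0 : f ≠ 0 := by
          intro hf
          rw [hf, Polynomial.natDegree_zero] at hkf
          omega
        exact (mul_ne_zero (Complex.ofReal_ne_zero.mpr
          (Polynomial.leadingCoeff_ne_zero.mpr hf0)) (pow_ne_zero _ (by norm_num))) h0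
    subst hg
    simp only [map_zero, zero_mul, add_zero] at ha
    have hn0 : f.natDegree = 0 := by
      by_contra hn
      have hf0 : f ≠ 0 := by
        intro hf
        rw [hf, Polynomial.natDegree_zero] at hn
        exact hn rfl
      have h0 := ha (-(f.natDegree:ℤ)) (by omega)
      rw [aeval_Uu_coeff_lead] at h0
      exact (mul_ne_zero (Complex.ofReal_ne_zero.mpr (Polynomial.leadingCoeff_ne_zero.mpr hf0))
        (pow_ne_zero _ (by norm_num))) h0
    obtain ⟨c, hc⟩ := Polynomial.natDegree_eq_zero.mp hn0
    refine ⟨c, ?_⟩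
    rw [← (Ideal.Quotient.mkₐ ℝ _).commutes c, Ideal.Quotient.mkₐ_eq_mk, ← hc]
    simp [MvPolynomial.algebraMap_eq]
  · rintro ⟨r, rfl⟩ m hm
    rw [AlgHom.commutes, amapR, HahnSeries.coeff_single_of_ne (by omega : m ≠ 0)]

end
end
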